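/- arXiv:2210.00953 — 2 statements merged into one kernel-verified Lean document; each statement's English description precedes it below -/
import Mathlib

section
/- For any integer t ≥ 1 with α·t ≤ 1/4 and every k ≥ t, the recursion satisfies: (i) ‖θ_k − θ_{k−t}‖ ≤ 2αt‖θ_{k−t}‖ + 2αt·b_max; (ii) ‖θ_k − θ_{k−t}‖ ≤ 4αt‖θ_k‖ + 4αt·b_max; and (iii) ‖θ_k − θ_{k−t}‖² ≤ 32α²t²‖θ_k‖² + 32α²t²·b_max². -/
open MeasureTheory ProbabilityTheory Filter Finset
open scoped ENNReal RealInnerProductSpace ProbabilityTheory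

set_option linter.unusedVariables false

noncomputable section

theorem stmt2 {d : ℕ} (hd : 1 ≤ d) (α : ℝ) (hα : 0 < α) (bmax : ℝ) (hbmax0 : 0 ≤ bmax)
    (M : ℕ → Matrix (Fin d) (Fin d) ℝ)
    (hM : ∀ k, ‖Matrix.toEuclideanCLM (𝕜 := ℝ) (M k)‖ ≤ 1)
    (bseq : ℕ → EuclideanSpace ℝ (Fin d)) (hb : ∀ k, ‖bseq k‖ ≤ bmax)
    (θ : ℕ → EuclideanSpace ℝ (Fin d))
    (hrec : ∀ k, θ (k + 1) = θ k + α • (Matrix.toEuclideanCLM (𝕜 := ℝ) (M k) (θ k) + bseq k))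
    (t : ℕ) (ht : 1 ≤ t) (hαt : α * t ≤ 1 / 4) :
    ∀ k, t ≤ k →
      ‖θ k - θ (k - t)‖ ≤ 2 * α * t * ‖θ (k - t)‖ + 2 * α * t * bmax ∧
      ‖θ k - θ (k - t)‖ ≤ 4 * α * t * ‖θ k‖ + 4 * α * t * bmax ∧
      ‖θ k - θ (k - t)‖ ^ 2 ≤
        32 * α ^ 2 * t ^ 2 * ‖θ k‖ ^ 2 + 32 * α ^ 2 * t ^ 2 * bmax ^ 2 := by
  -- one-step bound
  have hstep : ∀ m, ‖θ (m + 1) - θ m‖ ≤ α * (‖θ m‖ + bmax) := by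
    intro m
    have h1 : θ (m + 1) - θ m = α • (Matrix.toEuclideanCLM (𝕜 := ℝ) (M m) (θ m) + bseq m) := by
      rw [hrec m]; abel
    rw [h1, norm_smul]
    have hA : ‖Matrix.toEuclideanCLM (𝕜 := ℝ) (M m) (θ m)‖ ≤ ‖θ m‖ := by
      calc ‖Matrix.toEuclideanCLM (𝕜 := ℝ) (M m) (θ m)‖
          ≤ ‖Matrix.toEuclideanCLM (𝕜 := ℝ) (M m)‖ * ‖θ m‖ :=
            ContinuousLinearMap.le_opNorm _ _
        _ ≤ 1 * ‖θ m‖ := by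
            exact mul_le_mul_of_nonneg_right (hM m) (norm_nonneg _)
        _ = ‖θ m‖ := one_mul _
    have h2 : ‖Matrix.toEuclideanCLM (𝕜 := ℝ) (M m) (θ m) + bseq m‖ ≤ ‖θ m‖ + bmax := by
      calc ‖Matrix.toEuclideanCLM (𝕜 := ℝ) (M m) (θ m) + bseq m‖
          ≤ ‖Matrix.toEuclideanCLM (𝕜 := ℝ) (M m) (θ m)‖ + ‖bseq m‖ := norm_add_le _ _
        _ ≤ ‖θ m‖ + bmax := add_le_add hA (hb m)
    have : ‖(α : ℝ)‖ = α := abs_of_pos hα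
    rw [this]
    exact mul_le_mul_of_nonneg_left h2 hα.le
  intro k hk
  set n := k - t with hn
  have hkn : k = n + t := by omega
  set S := ‖θ n‖ + bmax with hS
  have hS0 : 0 ≤ S := add_nonneg (norm_nonneg _) hbmax0
  have ht0 : (0:ℝ) < t := by exact_mod_cast Nat.lt_of_lt_of_le Nat.zero_lt_one ht
  -- main induction
  have main : ∀ j, j ≤ t → ‖θ (n + j) - θ n‖ ≤ 2 * α * j * S := by
    intro j
    induction j with
    | zero => intro _; simp
    | succ j ih =>
      intro hjt
      have hj : j ≤ t := Nat.le_of_succ_le hjt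
      have ihj := ih hj
      have hjt' : (j:ℝ) ≤ t := by exact_mod_cast hj
      have hnormj : ‖θ (n + j)‖ ≤ ‖θ n‖ + 2 * α * j * S := by
        calc ‖θ (n + j)‖ ≤ ‖θ n‖ + ‖θ (n + j) - θ n‖ := by
              have := norm_add_le (θ n) (θ (n + j) - θ n)
              simpa using this
          _ ≤ ‖θ n‖ + 2 * α * j * S := by linarith
      have hsj := hstep (n + j)
      have htri : ‖θ (n + (j+1)) - θ n‖ ≤ ‖θ (n + j + 1) - θ (n + j)‖ + ‖θ (n + j) - θ n‖ := by
        have := norm_add_le (θ (n + j + 1) - θ (n + j)) (θ (n + j) - θ n)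
        have heq : θ (n + j + 1) - θ (n + j) + (θ (n + j) - θ n) = θ (n + (j+1)) - θ n := by
          have : n + (j + 1) = n + j + 1 := by ring
          rw [this]; abel
        rwa [heq] at this
      have hb1 : ‖θ (n + j + 1) - θ (n + j)‖ ≤ α * (‖θ n‖ + 2 * α * j * S + bmax) := by
        exact hsj.trans (mul_le_mul_of_nonneg_left (by linarith) hα.le)
      have hαj : α * j ≤ 1 / 4 := by
        have := mul_le_mul_of_nonneg_left hjt' hα.le
        linarith
      have hcast : ((j:ℕ)+1 : ℝ) = (j:ℝ) + 1 := by push_cast; ring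
      calc ‖θ (n + (j+1)) - θ n‖ ≤ α * (‖θ n‖ + 2 * α * j * S + bmax) + 2 * α * j * S := by
            linarith
        _ ≤ 2 * α * ((j:ℝ)+1) * S := by nlinarith [mul_nonneg hα.le hS0, mul_nonneg (mul_nonneg hα.le (Nat.cast_nonneg j)) hS0]
        _ = 2 * α * ((j+1 : ℕ):ℝ) * S := by push_cast; ring
  have h1 : ‖θ k - θ n‖ ≤ 2 * α * t * S := by
    have := main t le_rfl
    rwa [← hkn] at this
  have hi : ‖θ k - θ n‖ ≤ 2 * α * t * ‖θ n‖ + 2 * α * t * bmax := by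
    have : 2 * α * t * S = 2 * α * t * ‖θ n‖ + 2 * α * t * bmax := by rw [hS]; ring
    linarith
  -- bound ‖θ n‖ by ‖θ k‖
  have hαt2 : 2 * α * t ≤ 1 / 2 := by linarith
  have hαtpos : 0 < α * t := mul_pos hα ht0
  have hnk : ‖θ n‖ ≤ 2 * ‖θ k‖ + bmax := by
    have h2 : ‖θ n‖ ≤ ‖θ k‖ + ‖θ k - θ n‖ := by
      have h := norm_le_norm_add_norm_sub' (θ n) (θ k)
      rwa [norm_sub_rev] at h
    have h3 : ‖θ n‖ ≤ ‖θ k‖ + 2 * α * t * ‖θ n‖ + 2 * α * t * bmax := by linarith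
    nlinarith [norm_nonneg (θ n), norm_nonneg (θ k)]
  have hii : ‖θ k - θ n‖ ≤ 4 * α * t * ‖θ k‖ + 4 * α * t * bmax := by
    have : 2 * α * t * ‖θ n‖ ≤ 2 * α * t * (2 * ‖θ k‖ + bmax) :=
      mul_le_mul_of_nonneg_left hnk (by positivity)
    nlinarith [norm_nonneg (θ k)]
  refine ⟨hi, hii, ?_⟩
  have h0 : 0 ≤ ‖θ k - θ n‖ := norm_nonneg _
  nlinarith [norm_nonneg (θ k), mul_nonneg (mul_nonneg hα.le ht0.le) (norm_nonneg (θ k)), mul_nonneg (mul_nonneg hα.le ht0.le) hbmax0, sq_nonneg (4 * α * t * ‖θ k‖ - 4 * α * t * bmax)]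
end
end

section
/- In the semi-simulator tabular TD(0) setting, the zero-bias condition holds: E[A(x_k)θ* + b(x_k) | x_{k+1}] = 0 almost surely, where A(x_k) = e_{s_k}(γ e_{s_k^next} − e_{s_k})ᵀ and b(x_k) = r(s_k) e_{s_k}. Consequently, under the stepsize condition of the convergence theorem (achievable after rescaling A, b and α so that sup_x‖A(x)‖ ≤ 1), the asymptotic bias of TD(0) vanishes: E[θ_∞] = θ* = V. -/
open MeasureTheory ProbabilityTheory Filter Finset
open scoped ENNReal RealInnerProductSpace ProbabilityTheory

set_option linter.unusedVariables false

noncomputable section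

/-- The `k`-step transition kernel `P^k` of a Markov kernel `P`. -/
def kernelPow {𝒳 : Type*} [MeasurableSpace 𝒳] (P : Kernel 𝒳 𝒳) : ℕ → Kernel 𝒳 𝒳
  | 0 => Kernel.id
  | n + 1 => (kernelPow P n) ∘ₖ P

/-- `t` satisfies the defining property of the `ε`-mixing time of the chain with kernel `P`
with respect to the functions `(A, b)`: for every initial state `y` and every `k ≥ t`,
`‖E[A(x_k) ∣ x_0 = y] - Ā‖ ≤ ε * A_max` and `‖E[b(x_k) ∣ x_0 = y] - b̄‖ ≤ ε * b_max`.
The `ε`-mixing time is the least such `t ≥ 1`. -/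
def IsMixingBdd {𝒳 : Type*} [MeasurableSpace 𝒳] {n : Type*} [Fintype n] [DecidableEq n]
    (P : Kernel 𝒳 𝒳) (A : 𝒳 → Matrix n n ℝ) (b : 𝒳 → EuclideanSpace ℝ n)
    (Abar : Matrix n n ℝ) (bbar : EuclideanSpace ℝ n)
    (Amax bmax ε : ℝ) (t : ℕ) : Prop :=
  1 ≤ t ∧ ∀ y : 𝒳, ∀ k, t ≤ k →
    ‖(∫ z, Matrix.toEuclideanCLM (𝕜 := ℝ) (A z) ∂(kernelPow P k y)) -
        Matrix.toEuclideanCLM (𝕜 := ℝ) Abar‖ ≤ ε * Amax ∧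
    ‖(∫ z, b z ∂(kernelPow P k y)) - bbar‖ ≤ ε * bmax

/-- The transition kernel of the joint Markov chain `(x_k, θ_k)` for the LSA iteration
`θ_{k+1} = θ_k + α (A(x_k) θ_k + b(x_k))` driven by the chain with kernel `P`. -/
def jointKernel {𝒳 : Type*} [MeasurableSpace 𝒳] {n : Type*} [Fintype n] [DecidableEq n]
    (P : Kernel 𝒳 𝒳) [IsMarkovKernel P]
    (A : 𝒳 → Matrix n n ℝ) (b : 𝒳 → EuclideanSpace ℝ n) (α : ℝ)
    (hstep : Measurable fun q : (𝒳 × EuclideanSpace ℝ n) × 𝒳 =>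
      q.1.2 + α • (Matrix.toEuclideanCLM (𝕜 := ℝ) (A q.1.1) q.1.2 + b q.1.1)) :
    Kernel (𝒳 × EuclideanSpace ℝ n) (𝒳 × EuclideanSpace ℝ n) :=
  (P.comap Prod.fst measurable_fst) ⊗ₖ (Kernel.deterministic _ hstep)


set_option linter.unusedSectionVars false
set_option maxHeartbeats 1000000

lemma clm_apply {n : Type*} [Fintype n] [DecidableEq n] (M : Matrix n n ℝ)
    (x : EuclideanSpace ℝ n) (i : n) :
    (Matrix.toEuclideanCLM (𝕜 := ℝ) M x) i = ∑ j, M i j * x j := by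
  have h := Matrix.ofLp_toEuclideanCLM M x
  have h2 : (Matrix.toEuclideanCLM (𝕜 := ℝ) M x) i = (Matrix.toLin' M) (fun j => x j) i := by
    exact congrFun h i
  rw [h2, Matrix.toLin'_apply, Matrix.mulVec, dotProduct]

section PF

variable {𝒮 : Type*} [Fintype 𝒮] [DecidableEq 𝒮] [Nonempty 𝒮]
variable (PS : 𝒮 → 𝒮 → ℝ)

lemma pow_row_sum (hPS1 : ∀ s, ∑ s', PS s s' = 1) (N : ℕ) (s : 𝒮) :
    ∑ t, ((Matrix.of PS) ^ N) s t = 1 := by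
  induction N generalizing s with
  | zero => simp [Matrix.one_apply]
  | succ n ih =>
    rw [pow_succ]
    simp only [Matrix.mul_apply]
    rw [Finset.sum_comm]
    have : ∀ u, ∑ t, ((Matrix.of PS) ^ n) s u * (Matrix.of PS) u t
        = ((Matrix.of PS) ^ n) s u := by
      intro u
      rw [← Finset.mul_sum]
      have : ∑ t, (Matrix.of PS) u t = 1 := hPS1 u
      rw [this, mul_one]
    simp_rw [this]
    exact ih s

lemma vecMul_pow_invariant (v : 𝒮 → ℝ) (hinv : ∀ t, ∑ s, v s * PS s t = v t) (N : ℕ) (t : 𝒮) :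
    ∑ s, v s * ((Matrix.of PS) ^ N) s t = v t := by
  have hbase : Matrix.vecMul v (Matrix.of PS) = v := by
    funext t
    simpa [Matrix.vecMul, dotProduct] using hinv t
  have h : Matrix.vecMul v ((Matrix.of PS) ^ N) = v := by
    induction N with
    | zero => simp
    | succ n ih => rw [pow_succ, ← Matrix.vecMul_vecMul, ih, hbase]
  have := congrFun h t
  simpa [Matrix.vecMul, dotProduct] using this

lemma pf_zero (hPS0 : ∀ s s', 0 ≤ PS s s') (hPS1 : ∀ s, ∑ s', PS s s' = 1)
    (hprim : ∃ N : ℕ, ∀ s s', 0 < ((Matrix.of PS) ^ N) s s')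
    (v : 𝒮 → ℝ) (hinv : ∀ t, ∑ s, v s * PS s t = v t) (hsum : ∑ s, v s = 0) :
    v = 0 := by
  obtain ⟨N, hN⟩ := hprim
  set Q := (Matrix.of PS) ^ N with hQ
  by_cases h1 : ∀ s, 0 ≤ v s
  · funext s
    exact Finset.sum_eq_zero_iff_of_nonneg (fun i _ => h1 i) |>.mp hsum s (mem_univ s)
  by_cases h2 : ∀ s, v s ≤ 0
  · funext s
    have hsum' : ∑ s, (-v) s = 0 := by simp [hsum]
    have := Finset.sum_eq_zero_iff_of_nonneg
      (fun i _ => by simpa using h2 i) |>.mp hsum' s (mem_univ s)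
    simpa using this
  push_neg at h1 h2
  obtain ⟨s0, hs0⟩ := h1
  obtain ⟨s1, hs1⟩ := h2
  have key : ∀ t, |v t| < ∑ s, |v s| * Q s t := by
    intro t
    have hvt : v t = ∑ s, v s * Q s t := (vecMul_pow_invariant PS v hinv N t).symm
    have hlt1 : ∑ s, v s * Q s t < ∑ s, |v s| * Q s t := by
      refine Finset.sum_lt_sum (fun s _ => mul_le_mul_of_nonneg_right (le_abs_self _)
        (le_of_lt (hN s t))) ⟨s0, mem_univ s0, ?_⟩
      exact mul_lt_mul_of_pos_right (by rw [abs_of_neg hs0]; linarith) (hN s0 t)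
    have hlt2 : -(∑ s, v s * Q s t) < ∑ s, |v s| * Q s t := by
      rw [← Finset.sum_neg_distrib]
      simp_rw [← neg_mul]
      refine Finset.sum_lt_sum (fun s _ => mul_le_mul_of_nonneg_right (neg_le_abs (v s))
        (le_of_lt (hN s t))) ⟨s1, mem_univ s1, ?_⟩
      exact mul_lt_mul_of_pos_right (by rw [abs_of_pos hs1]; linarith) (hN s1 t)
    rw [hvt]
    exact abs_lt.mpr ⟨by linarith, hlt1⟩
  have hfinal : ∑ t, |v t| < ∑ t, ∑ s, |v s| * Q s t :=
    Finset.sum_lt_sum_of_nonempty univ_nonempty (fun t _ => key t)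
  rw [Finset.sum_comm] at hfinal
  have : ∀ s, ∑ t, |v s| * Q s t = |v s| := by
    intro s
    rw [← Finset.mul_sum, pow_row_sum PS hPS1 N s, mul_one]
  simp_rw [this] at hfinal
  exact absurd hfinal (lt_irrefl _)

end PF


section Meas
variable {𝒳 : Type*} [MeasurableSpace 𝒳] [Fintype 𝒳] [MeasurableSingletonClass 𝒳]
  {n : Type*} [Fintype n] [DecidableEq n]
  (K : Kernel 𝒳 𝒳) [IsMarkovKernel K]
  (A : 𝒳 → Matrix n n ℝ) (b : 𝒳 → EuclideanSpace ℝ n) (α : ℝ)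
  (hsm : Measurable fun q : (𝒳 × EuclideanSpace ℝ n) × 𝒳 =>
      q.1.2 + α • (Matrix.toEuclideanCLM (𝕜 := ℝ) (A q.1.1) q.1.2 + b q.1.1))

abbrev Tstep : 𝒳 × EuclideanSpace ℝ n → EuclideanSpace ℝ n :=
  fun p => p.2 + α • (Matrix.toEuclideanCLM (𝕜 := ℝ) (A p.1) p.2 + b p.1)

include hsm in
lemma Tstep_meas : Measurable (Tstep A b α) :=
  hsm.comp (measurable_id.prodMk measurable_fst)

lemma jk_eq (p : 𝒳 × EuclideanSpace ℝ n) :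
    jointKernel K A b α hsm p = (K p.1).map (fun x' => (x', Tstep A b α p)) := by
  ext s hs
  rw [jointKernel, Kernel.compProd_apply hs, Measure.map_apply
    measurable_prodMk_right hs, Kernel.comap_apply,
    ← lintegral_indicator_one (measurable_prodMk_right hs)]
  refine lintegral_congr fun x' => ?_
  have hset : {c | (x', c) ∈ s} = Prod.mk x' ⁻¹' s := rfl
  rw [Kernel.deterministic_apply, Measure.dirac_apply' _ (measurable_prodMk_left hs)]
  simp only [Set.indicator_apply]
  rfl
end Meas

section Meas2
variable {𝒳 : Type*} [MeasurableSpace 𝒳] [Fintype 𝒳] [DecidableEq 𝒳] [MeasurableSingletonClass 𝒳]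
  {n : Type*} [Fintype n] [DecidableEq n]
  (K : Kernel 𝒳 𝒳) [IsMarkovKernel K]
  (A : 𝒳 → Matrix n n ℝ) (b : 𝒳 → EuclideanSpace ℝ n) (α : ℝ)
  (hsm : Measurable fun q : (𝒳 × EuclideanSpace ℝ n) × 𝒳 =>
      q.1.2 + α • (Matrix.toEuclideanCLM (𝕜 := ℝ) (A q.1.1) q.1.2 + b q.1.1))
  (ν : Measure (𝒳 × EuclideanSpace ℝ n)) [IsProbabilityMeasure ν]

include hsm in
lemma master {F : Type*} [NormedAddCommGroup F] [NormedSpace ℝ F] [CompleteSpace F]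
    [MeasurableSpace F] [BorelSpace F] [SecondCountableTopology F]
    (hνinv : Kernel.Invariant (jointKernel K A b α hsm) ν)
    (hνL2 : Integrable (fun p : 𝒳 × EuclideanSpace ℝ n => ‖p.2‖ ^ 2) ν)
    (C : ℝ) (f : 𝒳 × EuclideanSpace ℝ n → F) (hf : Measurable f)
    (hfb : ∀ z, ‖f z‖ ≤ C * (1 + ‖z.2‖)) :
    ∫ z, f z ∂ν = ∫ p, ∫ x', f (x', Tstep A b α p) ∂(K p.1) ∂ν := by
  set κ := jointKernel K A b α hsm with hκ
  set T := Tstep A b α with hT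
  have hTm : Measurable T := Tstep_meas A b α hsm
  -- growth bound for T
  set CA : ℝ := ∑ x : 𝒳, ‖Matrix.toEuclideanCLM (𝕜 := ℝ) (A x)‖ with hCA
  set CB : ℝ := ∑ x : 𝒳, ‖b x‖ with hCB
  have hACA : ∀ x, ‖Matrix.toEuclideanCLM (𝕜 := ℝ) (A x)‖ ≤ CA := by
    intro x; rw [hCA]
    exact Finset.single_le_sum (f := fun y => ‖Matrix.toEuclideanCLM (𝕜 := ℝ) (A y)‖)
      (fun i _ => norm_nonneg _) (Finset.mem_univ x)
  have hBCB : ∀ x, ‖b x‖ ≤ CB := by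
    intro x; rw [hCB]
    exact Finset.single_le_sum (f := fun y => ‖b y‖) (fun i _ => norm_nonneg _)
      (Finset.mem_univ x)
  have hca : 0 ≤ CA := by rw [hCA]; exact Finset.sum_nonneg fun i _ => norm_nonneg _
  have hcb : 0 ≤ CB := by rw [hCB]; exact Finset.sum_nonneg fun i _ => norm_nonneg _
  set D : ℝ := 1 + |α| * CA + |α| * CB with hD
  have hD0 : 0 ≤ D := by
    rw [hD]
    nlinarith [mul_nonneg (abs_nonneg α) hca, mul_nonneg (abs_nonneg α) hcb]
  have hTb : ∀ p : 𝒳 × EuclideanSpace ℝ n, ‖T p‖ ≤ D * (1 + ‖p.2‖) := by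
    intro p
    have h1 : ‖T p‖ ≤ ‖p.2‖ + |α| * (‖Matrix.toEuclideanCLM (𝕜 := ℝ) (A p.1) p.2‖ + ‖b p.1‖) := by
      have e1 : ‖T p‖ ≤ ‖p.2‖ + ‖α • (Matrix.toEuclideanCLM (𝕜 := ℝ) (A p.1) p.2 + b p.1)‖ :=
        norm_add_le _ _
      have e2 : ‖α • (Matrix.toEuclideanCLM (𝕜 := ℝ) (A p.1) p.2 + b p.1)‖
          = |α| * ‖Matrix.toEuclideanCLM (𝕜 := ℝ) (A p.1) p.2 + b p.1‖ := by
        rw [norm_smul, Real.norm_eq_abs]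
      have e3 : ‖Matrix.toEuclideanCLM (𝕜 := ℝ) (A p.1) p.2 + b p.1‖
          ≤ ‖Matrix.toEuclideanCLM (𝕜 := ℝ) (A p.1) p.2‖ + ‖b p.1‖ := norm_add_le _ _
      nlinarith [abs_nonneg α]
    have h2 : ‖Matrix.toEuclideanCLM (𝕜 := ℝ) (A p.1) p.2‖ ≤ CA * ‖p.2‖ :=
      le_trans ((Matrix.toEuclideanCLM (𝕜 := ℝ) (A p.1)).le_opNorm p.2)
        (mul_le_mul_of_nonneg_right (hACA p.1) (norm_nonneg _))
    have h3 : |α| * (CA * ‖p.2‖ + CB) ≤ (|α| * CA + |α| * CB) * (1 + ‖p.2‖) := by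
      nlinarith [mul_nonneg (mul_nonneg (abs_nonneg α) hca) (norm_nonneg p.2),
        mul_nonneg (mul_nonneg (abs_nonneg α) hcb) (norm_nonneg p.2),
        mul_nonneg (abs_nonneg α) hca, mul_nonneg (abs_nonneg α) hcb]
    have h4 : |α| * (‖Matrix.toEuclideanCLM (𝕜 := ℝ) (A p.1) p.2‖ + ‖b p.1‖)
        ≤ |α| * (CA * ‖p.2‖ + CB) :=
      mul_le_mul_of_nonneg_left (add_le_add h2 (hBCB p.1)) (abs_nonneg α)
    have : ‖p.2‖ ≤ 1 * (1 + ‖p.2‖) := by nlinarith [norm_nonneg p.2]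
    calc ‖T p‖ ≤ ‖p.2‖ + |α| * (CA * ‖p.2‖ + CB) := by linarith
      _ ≤ 1 * (1 + ‖p.2‖) + (|α| * CA + |α| * CB) * (1 + ‖p.2‖) := by linarith
      _ = D * (1 + ‖p.2‖) := by ring
  -- integrability of growth functions
  have hg0 : Integrable (fun p : 𝒳 × EuclideanSpace ℝ n => 1 + ‖p.2‖) ν := by
    refine Integrable.mono' ((integrable_const (2:ℝ)).add hνL2)
      ((measurable_const.add measurable_snd.norm).aestronglyMeasurable)
      (Filter.Eventually.of_forall fun p => ?_)
    have h := norm_nonneg p.2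
    have hap : ((fun _ : 𝒳 × EuclideanSpace ℝ n => (2:ℝ))
        + fun q : 𝒳 × EuclideanSpace ℝ n => ‖q.2‖ ^ 2) p = 2 + ‖p.2‖ ^ 2 := rfl
    rw [Real.norm_eq_abs, abs_of_nonneg (by positivity), hap]
    nlinarith
  haveI hmk : IsMarkovKernel κ := by
    rw [hκ, jointKernel]; infer_instance
  -- the second-marginal representation
  have hbind : ν.bind κ = ν := hνinv
  have hsnd : (ν.compProd κ).map Prod.snd = ν.bind κ := by
    ext s hs
    rw [Measure.map_apply measurable_snd hs, Measure.compProd_apply (measurable_snd hs),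
      Measure.bind_apply hs (Kernel.measurable κ).aemeasurable]
    rfl
  have hκint : ∀ p, (κ p) = (K p.1).map (fun x' => (x', T p)) := jk_eq K A b α hsm
  -- integrability on the product
  have hfsm : AEStronglyMeasurable (fun z : (𝒳 × EuclideanSpace ℝ n) × (𝒳 × EuclideanSpace ℝ n)
      => f z.2) (ν.compProd κ) := (hf.comp measurable_snd).aestronglyMeasurable
  have hinner_eq : ∀ p, ∫ ω, ‖f ω‖ ∂(κ p) = ∫ x', ‖f (x', T p)‖ ∂(K p.1) := by
    intro p
    rw [hκint p, integral_map (measurable_prodMk_right).aemeasurable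
      (hf.norm.aestronglyMeasurable)]
  have hint : Integrable (fun z : (𝒳 × EuclideanSpace ℝ n) × (𝒳 × EuclideanSpace ℝ n) => f z.2)
      (ν.compProd κ) := by
    rw [Measure.integrable_compProd_iff hfsm]
    constructor
    · refine Filter.Eventually.of_forall fun p => ?_
      rw [hκint p]
      rw [integrable_map_measure hf.aestronglyMeasurable measurable_prodMk_right.aemeasurable]
      exact Integrable.of_finite
    · refine Integrable.mono' (hg0.const_mul (|C| * (1 + D))) ?_
        (Filter.Eventually.of_forall fun p => ?_)
      · -- measurability of p ↦ ∫ ω, ‖f ω‖ ∂κ p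
        have : (fun p => ∫ ω, ‖f ω‖ ∂(κ p))
            = fun p => ∑ x' : 𝒳, ((K p.1) {x'}).toReal • ‖f (x', T p)‖ := by
          funext p
          rw [hinner_eq p, integral_fintype Integrable.of_finite]
          simp only [Measure.real_def]
        rw [this]
        refine (Finset.aestronglyMeasurable_fun_sum _ fun x' _ => ?_)
        refine AEStronglyMeasurable.fun_smul ?_ ?_
        · have : (fun p : 𝒳 × EuclideanSpace ℝ n => ((K p.1) {x'}).toReal)
              = fun p => ∑ x : 𝒳, (if p.1 = x then ((K x) {x'}).toReal else 0) := by
            funext p; rw [Finset.sum_ite_eq _ p.1]; simp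
          rw [this]
          refine Finset.aestronglyMeasurable_fun_sum _ fun x _ => ?_
          refine (Measurable.ite ?_ measurable_const measurable_const).aestronglyMeasurable
          exact measurable_fst (MeasurableSet.singleton x)
        · exact ((hf.comp (measurable_const.prodMk hTm)).norm).aestronglyMeasurable
      · -- bound
        have hb1 : ∀ x', ‖f (x', T p)‖ ≤ |C| * (1 + D) * (1 + ‖p.2‖) := by
          intro x'
          calc ‖f (x', T p)‖ ≤ C * (1 + ‖(x', T p).2‖) := hfb _
            _ ≤ |C| * (1 + ‖T p‖) := by
                have : (0:ℝ) ≤ 1 + ‖T p‖ := by positivity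
                exact mul_le_mul (le_abs_self C) (le_refl _) this (abs_nonneg C)
            _ ≤ |C| * (1 + D * (1 + ‖p.2‖)) := by
                gcongr
                exact hTb p
            _ ≤ |C| * (1 + D) * (1 + ‖p.2‖) := by
                nlinarith [norm_nonneg p.2, abs_nonneg C,
                  mul_nonneg (abs_nonneg C) hD0, mul_nonneg (mul_nonneg (abs_nonneg C) hD0)
                    (norm_nonneg p.2)]
        rw [hinner_eq p]
        have h2 : ∫ x', ‖f (x', T p)‖ ∂(K p.1) ≤ |C| * (1 + D) * (1 + ‖p.2‖) := by
          calc ∫ x', ‖f (x', T p)‖ ∂(K p.1)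
              ≤ ∫ _x' , |C| * (1 + D) * (1 + ‖p.2‖) ∂(K p.1) :=
                integral_mono Integrable.of_finite (integrable_const _) hb1
            _ = |C| * (1 + D) * (1 + ‖p.2‖) := by simp
        have h3 : 0 ≤ ∫ x', ‖f (x', T p)‖ ∂(K p.1) :=
          integral_nonneg fun _ => norm_nonneg _
        rw [Real.norm_eq_abs, abs_of_nonneg h3]
        exact h2
  -- the chain of equalities
  calc ∫ z, f z ∂ν = ∫ z, f z ∂((ν.compProd κ).map Prod.snd) := by rw [hsnd, hbind]
    _ = ∫ z, f z.2 ∂(ν.compProd κ) :=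
        integral_map measurable_snd.aemeasurable
          (by rw [hsnd, hbind]; exact hf.aestronglyMeasurable)
    _ = ∫ p, ∫ ω, f ω ∂(κ p) ∂ν := Measure.integral_compProd hint
    _ = ∫ p, ∫ x', f (x', T p) ∂(K p.1) ∂ν := by
        refine integral_congr_ae (Filter.Eventually.of_forall fun p => ?_)
        show (∫ ω, f ω ∂(κ p)) = ∫ x', f (x', T p) ∂(K p.1)
        rw [hκint p]
        exact integral_map measurable_prodMk_right.aemeasurable hf.aestronglyMeasurable

end Meas2

section Meas3
variable {𝒳 : Type*} [MeasurableSpace 𝒳] [Fintype 𝒳] [DecidableEq 𝒳] [MeasurableSingletonClass 𝒳]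
  {n : Type*} [Fintype n] [DecidableEq n]
  (K : Kernel 𝒳 𝒳) [IsMarkovKernel K]
  (A : 𝒳 → Matrix n n ℝ) (b : 𝒳 → EuclideanSpace ℝ n) (α : ℝ)
  (hsm : Measurable fun q : (𝒳 × EuclideanSpace ℝ n) × 𝒳 =>
      q.1.2 + α • (Matrix.toEuclideanCLM (𝕜 := ℝ) (A q.1.1) q.1.2 + b q.1.1))
  (ν : Measure (𝒳 × EuclideanSpace ℝ n)) [IsProbabilityMeasure ν]

-- integrability from quadratic moment
lemma integrable_bnd {F : Type*} [NormedAddCommGroup F] [NormedSpace ℝ F]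
    (hνL2 : Integrable (fun p : 𝒳 × EuclideanSpace ℝ n => ‖p.2‖ ^ 2) ν)
    (g : 𝒳 × EuclideanSpace ℝ n → F) (hg : AEStronglyMeasurable g ν) (C : ℝ)
    (hb : ∀ z, ‖g z‖ ≤ C * (1 + ‖z.2‖)) : Integrable g ν := by
  refine Integrable.mono' (((integrable_const (2:ℝ)).add hνL2).const_mul |C|) hg
    (Filter.Eventually.of_forall fun p => ?_)
  have h1 : ‖g p‖ ≤ C * (1 + ‖p.2‖) := hb p
  have h2 : C * (1 + ‖p.2‖) ≤ |C| * (1 + ‖p.2‖) :=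
    mul_le_mul_of_nonneg_right (le_abs_self C) (by positivity)
  show ‖g p‖ ≤ |C| * (2 + ‖p.2‖ ^ 2)
  have h3 : 1 + ‖p.2‖ ≤ 2 + ‖p.2‖ ^ 2 := by nlinarith [norm_nonneg p.2]
  nlinarith [abs_nonneg C, norm_nonneg p.2]

lemma integral_ind_smul {F : Type*} [NormedAddCommGroup F] [NormedSpace ℝ F] [CompleteSpace F]
    (μ : Measure 𝒳) [IsFiniteMeasure μ] (q : 𝒳) (v : F) :
    ∫ x', (if x' = q then (1:ℝ) else 0) • v ∂μ = (μ {q}).toReal • v := by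
  have : (fun x' : 𝒳 => (if x' = q then (1:ℝ) else 0) • v)
      = Set.indicator {q} (fun _ => v) := by
    classical
    funext x'
    rw [Set.indicator_apply]
    by_cases h : x' = q <;> simp [h]
  rw [this, integral_indicator_const v (measurableSet_singleton q), Measure.real_def]

include hsm in
lemma w_rec (hνinv : Kernel.Invariant (jointKernel K A b α hsm) ν)
    (hνL2 : Integrable (fun p : 𝒳 × EuclideanSpace ℝ n => ‖p.2‖ ^ 2) ν) (q : 𝒳) :
    (ν (Prod.fst ⁻¹' {q})).toReal
      = ∑ x, ((K x) {q}).toReal * (ν (Prod.fst ⁻¹' {x})).toReal := by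
  have hSm : ∀ x : 𝒳, MeasurableSet (Prod.fst ⁻¹' {x} : Set (𝒳 × EuclideanSpace ℝ n)) :=
    fun x => measurable_fst (measurableSet_singleton x)
  have hindint : ∀ x : 𝒳, ∫ p : 𝒳 × EuclideanSpace ℝ n,
      (if p.1 = x then (1:ℝ) else 0) ∂ν = (ν (Prod.fst ⁻¹' {x})).toReal := by
    intro x
    have : (fun p : 𝒳 × EuclideanSpace ℝ n => (if p.1 = x then (1:ℝ) else 0))
        = Set.indicator (Prod.fst ⁻¹' {x}) (fun _ => (1:ℝ)) := by
      classical
      funext p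
      rw [Set.indicator_apply]
      by_cases h : p.1 = x <;> simp [h]
    rw [this, integral_indicator_const (1:ℝ) (hSm x), Measure.real_def]
    simp
  have hmeas : Measurable (fun z : 𝒳 × EuclideanSpace ℝ n =>
      (if z.1 = q then (1:ℝ) else 0)) := by
    refine Measurable.ite ?_ measurable_const measurable_const
    exact measurable_fst (measurableSet_singleton q)
  have hmain := master K A b α hsm ν hνinv hνL2 1
    (fun z => if z.1 = q then (1:ℝ) else 0) hmeas
    (fun z => by
      have : ‖if z.1 = q then (1:ℝ) else 0‖ ≤ 1 := by split <;> simp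
      nlinarith [norm_nonneg z.2])
  rw [hindint q] at hmain
  rw [hmain]
  have hinner : ∀ p : 𝒳 × EuclideanSpace ℝ n,
      (∫ x', (if (x', Tstep A b α p).1 = q then (1:ℝ) else 0) ∂(K p.1))
      = ((K p.1) {q}).toReal := by
    intro p
    have h := integral_ind_smul (K p.1) q (1:ℝ)
    simp only [smul_eq_mul, mul_one] at h
    exact h
  simp_rw [hinner]
  have hexp : (fun p : 𝒳 × EuclideanSpace ℝ n => ((K p.1) {q}).toReal)
      = fun p => ∑ x, (if p.1 = x then ((K x) {q}).toReal else 0) := by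
    funext p
    rw [Finset.sum_ite_eq]
    simp
  rw [hexp]
  rw [integral_finset_sum]
  · refine Finset.sum_congr rfl fun x _ => ?_
    have : (fun p : 𝒳 × EuclideanSpace ℝ n => (if p.1 = x then ((K x) {q}).toReal else 0))
        = fun p => (if p.1 = x then (1:ℝ) else 0) * ((K x) {q}).toReal := by
      funext p
      by_cases h : p.1 = x <;> simp [h]
    rw [this, integral_mul_const, hindint x, mul_comm]
  · intro x _
    have : (fun p : 𝒳 × EuclideanSpace ℝ n => (if p.1 = x then ((K x) {q}).toReal else 0))
        = Set.indicator (Prod.fst ⁻¹' {x}) (fun _ => ((K x) {q}).toReal) := by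
      classical
      funext p
      rw [Set.indicator_apply]
      by_cases h : p.1 = x <;> simp [h]
    rw [this]
    exact (integrable_const _).indicator (hSm x)


lemma ind_integral (x : 𝒳) :
    ∫ p : 𝒳 × EuclideanSpace ℝ n, (if p.1 = x then (1:ℝ) else 0) ∂ν
      = (ν (Prod.fst ⁻¹' {x})).toReal := by
  classical
  have hSm : MeasurableSet (Prod.fst ⁻¹' {x} : Set (𝒳 × EuclideanSpace ℝ n)) :=
    measurable_fst (measurableSet_singleton x)
  have : (fun p : 𝒳 × EuclideanSpace ℝ n => (if p.1 = x then (1:ℝ) else 0))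
      = Set.indicator (Prod.fst ⁻¹' {x}) (fun _ => (1:ℝ)) := by
    funext p
    rw [Set.indicator_apply]
    by_cases h : p.1 = x <;> simp [h]
  rw [this, integral_indicator_const (1:ℝ) hSm, Measure.real_def]
  simp

include hsm in
lemma M_rec (hνinv : Kernel.Invariant (jointKernel K A b α hsm) ν)
    (hνL2 : Integrable (fun p : 𝒳 × EuclideanSpace ℝ n => ‖p.2‖ ^ 2) ν) (q : 𝒳) :
    (∫ p : 𝒳 × EuclideanSpace ℝ n, (if p.1 = q then (1:ℝ) else 0) • p.2 ∂ν)
      = ∑ x, ((K x) {q}).toReal •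
          ((∫ p : 𝒳 × EuclideanSpace ℝ n, (if p.1 = x then (1:ℝ) else 0) • p.2 ∂ν)
            + α • (Matrix.toEuclideanCLM (𝕜 := ℝ) (A x)
                (∫ p : 𝒳 × EuclideanSpace ℝ n, (if p.1 = x then (1:ℝ) else 0) • p.2 ∂ν)
              + (ν (Prod.fst ⁻¹' {x})).toReal • b x)) := by
  classical
  set T := Tstep A b α with hT
  have hSm : ∀ x : 𝒳, MeasurableSet (Prod.fst ⁻¹' {x} : Set (𝒳 × EuclideanSpace ℝ n)) :=
    fun x => measurable_fst (measurableSet_singleton x)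
  have hindm : ∀ x : 𝒳, Measurable (fun z : 𝒳 × EuclideanSpace ℝ n =>
      (if z.1 = x then (1:ℝ) else 0)) := fun x =>
    Measurable.ite (measurable_fst (measurableSet_singleton x)) measurable_const
      measurable_const
  have hfm : Measurable (fun z : 𝒳 × EuclideanSpace ℝ n =>
      (if z.1 = q then (1:ℝ) else 0) • z.2) := (hindm q).smul measurable_snd
  have hnormb : ∀ (x : 𝒳) (z : 𝒳 × EuclideanSpace ℝ n),
      ‖(if z.1 = x then (1:ℝ) else 0) • z.2‖ ≤ 1 * (1 + ‖z.2‖) := by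
    intro x z
    rw [norm_smul]
    have : ‖if z.1 = x then (1:ℝ) else 0‖ ≤ 1 := by split <;> simp
    nlinarith [norm_nonneg z.2]
  have hmain := master K A b α hsm ν hνinv hνL2 1
    (fun z => (if z.1 = q then (1:ℝ) else 0) • z.2) hfm (hnormb q)
  rw [hmain]
  have hinner : ∀ p : 𝒳 × EuclideanSpace ℝ n,
      (∫ x', (if (x', T p).1 = q then (1:ℝ) else 0) • (x', T p).2 ∂(K p.1))
      = ((K p.1) {q}).toReal • T p := fun p => integral_ind_smul (K p.1) q (T p)
  rw [← hT]
  simp_rw [hinner]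
  have hexp : (fun p : 𝒳 × EuclideanSpace ℝ n => ((K p.1) {q}).toReal • T p)
      = fun p => ∑ x, (if p.1 = x then (1:ℝ) else 0) • (((K x) {q}).toReal • T p) := by
    funext p
    have : ∀ x : 𝒳, (if p.1 = x then (1:ℝ) else 0) • (((K x) {q}).toReal • T p)
        = (if p.1 = x then ((K x) {q}).toReal • T p else 0) := by
      intro x; by_cases h : p.1 = x <;> simp [h]
    simp_rw [this]
    rw [Finset.sum_ite_eq]
    simp
  rw [hexp]
  -- integrability of the summands
  have hTm : Measurable T := Tstep_meas A b α hsm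
  have hI1 : ∀ x : 𝒳, Integrable (fun p : 𝒳 × EuclideanSpace ℝ n =>
      (if p.1 = x then (1:ℝ) else 0) • p.2) ν := by
    intro x
    exact integrable_bnd ν hνL2 _ ((hindm x).smul measurable_snd).aestronglyMeasurable 1
      (hnormb x)
  have hI2 : ∀ x : 𝒳, Integrable (fun p : 𝒳 × EuclideanSpace ℝ n =>
      Matrix.toEuclideanCLM (𝕜 := ℝ) (A x) ((if p.1 = x then (1:ℝ) else 0) • p.2)) ν := by
    intro x
    refine integrable_bnd ν hνL2 _
      (((Matrix.toEuclideanCLM (𝕜 := ℝ) (A x)).continuous.measurable.comp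
        ((hindm x).smul measurable_snd)).aestronglyMeasurable)
      ‖Matrix.toEuclideanCLM (𝕜 := ℝ) (A x)‖ (fun z => ?_)
    calc ‖Matrix.toEuclideanCLM (𝕜 := ℝ) (A x) ((if z.1 = x then (1:ℝ) else 0) • z.2)‖
        ≤ ‖Matrix.toEuclideanCLM (𝕜 := ℝ) (A x)‖ * ‖(if z.1 = x then (1:ℝ) else 0) • z.2‖ :=
          ContinuousLinearMap.le_opNorm _ _
      _ ≤ ‖Matrix.toEuclideanCLM (𝕜 := ℝ) (A x)‖ * (1 * (1 + ‖z.2‖)) :=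
          mul_le_mul_of_nonneg_left (hnormb x z) (norm_nonneg _)
      _ = ‖Matrix.toEuclideanCLM (𝕜 := ℝ) (A x)‖ * (1 + ‖z.2‖) := by ring
  have hI3 : ∀ x : 𝒳, Integrable (fun p : 𝒳 × EuclideanSpace ℝ n =>
      (if p.1 = x then (1:ℝ) else 0) • b x) ν := by
    intro x
    refine integrable_bnd ν hνL2 _ ((hindm x).smul measurable_const).aestronglyMeasurable
      ‖b x‖ (fun z => ?_)
    rw [norm_smul]
    have h1 : ‖if z.1 = x then (1:ℝ) else 0‖ ≤ 1 := by split <;> simp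
    nlinarith [norm_nonneg (b x), norm_nonneg z.2]
  have hITx : ∀ x : 𝒳, Integrable (fun p : 𝒳 × EuclideanSpace ℝ n =>
      (if p.1 = x then (1:ℝ) else 0) • ((K x) {q}).toReal • T p) ν := by
    intro x
    have hdec : (fun p : 𝒳 × EuclideanSpace ℝ n =>
        (if p.1 = x then (1:ℝ) else 0) • ((K x) {q}).toReal • T p)
        = fun p => ((K x) {q}).toReal • ((if p.1 = x then (1:ℝ) else 0) • p.2
            + α • (Matrix.toEuclideanCLM (𝕜 := ℝ) (A x) ((if p.1 = x then (1:ℝ) else 0) • p.2)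
              + (if p.1 = x then (1:ℝ) else 0) • b x)) := by
      funext p
      by_cases h : p.1 = x
      · have hTp : T p = p.2 + α • (Matrix.toEuclideanCLM (𝕜 := ℝ) (A x) p.2 + b x) := by
          rw [hT]
          show p.2 + α • (Matrix.toEuclideanCLM (𝕜 := ℝ) (A p.1) p.2 + b p.1) = _
          rw [h]
        rw [if_pos h, hTp]
        simp only [one_smul]
      · simp [h]
    rw [hdec]
    exact (((hI1 x).add (((hI2 x).add (hI3 x)).smul α)).smul (((K x) {q}).toReal))
  rw [integral_finset_sum _ (fun x _ => hITx x)]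
  refine Finset.sum_congr rfl fun x _ => ?_
  have hdec : (fun p : 𝒳 × EuclideanSpace ℝ n =>
      (if p.1 = x then (1:ℝ) else 0) • ((K x) {q}).toReal • T p)
      = fun p => ((K x) {q}).toReal • ((if p.1 = x then (1:ℝ) else 0) • p.2
          + α • (Matrix.toEuclideanCLM (𝕜 := ℝ) (A x) ((if p.1 = x then (1:ℝ) else 0) • p.2)
            + (if p.1 = x then (1:ℝ) else 0) • b x)) := by
    funext p
    by_cases h : p.1 = x
    · have hTp : T p = p.2 + α • (Matrix.toEuclideanCLM (𝕜 := ℝ) (A x) p.2 + b x) := by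
        rw [hT]
        show p.2 + α • (Matrix.toEuclideanCLM (𝕜 := ℝ) (A p.1) p.2 + b p.1) = _
        rw [h]
      rw [if_pos h, hTp]
      simp only [one_smul]
    · simp [h]
  rw [hdec, integral_smul]
  congr 1
  have Hs : Integrable (fun p : 𝒳 × EuclideanSpace ℝ n =>
      α • (Matrix.toEuclideanCLM (𝕜 := ℝ) (A x) ((if p.1 = x then (1:ℝ) else 0) • p.2)
        + (if p.1 = x then (1:ℝ) else 0) • b x)) ν := by
    exact ((hI2 x).add (hI3 x)).smul α
  rw [integral_add (hI1 x) Hs, integral_smul, integral_add (hI2 x) (hI3 x),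
    ContinuousLinearMap.integral_comp_comm _ (hI1 x), integral_smul_const, ind_integral]


lemma w_total : ∑ x : 𝒳, (ν (Prod.fst ⁻¹' {x})).toReal = 1 := by
  classical
  have h1 : ∀ x : 𝒳, (ν (Prod.fst ⁻¹' {x})).toReal
      = ∫ p : 𝒳 × EuclideanSpace ℝ n, (if p.1 = x then (1:ℝ) else 0) ∂ν :=
    fun x => (ind_integral ν x).symm
  simp_rw [h1]
  rw [← integral_finset_sum]
  · have : ∀ p : 𝒳 × EuclideanSpace ℝ n, ∑ x : 𝒳, (if p.1 = x then (1:ℝ) else 0) = 1 := by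
      intro p
      rw [Finset.sum_ite_eq]
      simp
    simp_rw [this]
    simp
  · intro x _
    refine Integrable.mono' (integrable_const (1:ℝ))
      (Measurable.aestronglyMeasurable ?_) (Filter.Eventually.of_forall fun p => ?_)
    · exact Measurable.ite (measurable_fst (measurableSet_singleton x)) measurable_const
        measurable_const
    · split <;> simp

lemma M_total (hνL2 : Integrable (fun p : 𝒳 × EuclideanSpace ℝ n => ‖p.2‖ ^ 2) ν) :
    ∑ x : 𝒳, (∫ p : 𝒳 × EuclideanSpace ℝ n, (if p.1 = x then (1:ℝ) else 0) • p.2 ∂ν)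
      = ∫ p : 𝒳 × EuclideanSpace ℝ n, p.2 ∂ν := by
  classical
  rw [← integral_finset_sum]
  · refine integral_congr_ae (Filter.Eventually.of_forall fun p => ?_)
    have h1 : ∀ x : 𝒳, (if p.1 = x then (1:ℝ) else 0) • p.2
        = (if p.1 = x then p.2 else 0) := by
      intro x; by_cases h : p.1 = x <;> simp [h]
    simp_rw [h1]
    rw [Finset.sum_ite_eq]
    simp
  · intro x _
    refine integrable_bnd ν hνL2 _ ?_ 1 (fun z => ?_)
    · exact ((Measurable.ite (measurable_fst (measurableSet_singleton x)) measurable_const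
        measurable_const : Measurable fun z : 𝒳 × EuclideanSpace ℝ n =>
          if z.1 = x then (1:ℝ) else 0).smul measurable_snd).aestronglyMeasurable
    · rw [norm_smul]
      have : ‖if z.1 = x then (1:ℝ) else 0‖ ≤ 1 := by split <;> simp
      nlinarith [norm_nonneg z.2]

end Meas3


theorem stmt14
    {𝒮 : Type*} [Fintype 𝒮] [DecidableEq 𝒮] [Nonempty 𝒮]
    [MeasurableSpace 𝒮] [MeasurableSingletonClass 𝒮]
    -- the Markov reward process: transition matrix `PS`, irreducible and aperiodic
    -- (primitive), stationary distribution `πS`, reward `r`, discount `γ`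
    (PS : 𝒮 → 𝒮 → ℝ) (hPS0 : ∀ s s', 0 ≤ PS s s') (hPS1 : ∀ s, ∑ s', PS s s' = 1)
    (hprim : ∃ N : ℕ, ∀ s s', 0 < ((Matrix.of PS) ^ N) s s')
    (πS : 𝒮 → ℝ) (hπS0 : ∀ s, 0 ≤ πS s) (hπS1 : ∑ s, πS s = 1)
    (hπSinv : ∀ s', ∑ s, πS s * PS s s' = πS s')
    (r : 𝒮 → ℝ) (γ : ℝ) (hγ0 : 0 ≤ γ) (hγ1 : γ < 1)
    -- `V` is the value function, the unique solution of the Bellman equation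
    (V : EuclideanSpace ℝ 𝒮) (hV : ∀ s, V s = r s + γ * ∑ s', PS s s' * V s')
    -- the semi-simulator data chain `x_k = (s_k, s_k^next)` on `𝒮 × 𝒮`
    (K : Kernel (𝒮 × 𝒮) (𝒮 × 𝒮)) [IsMarkovKernel K]
    (hK : ∀ p q : 𝒮 × 𝒮, K p {q} = ENNReal.ofReal (PS p.1 q.1 * PS q.1 q.2))
    -- the tabular TD(0) coefficients `A(x) = e_s (γ e_{s'} - e_s)ᵀ`, `b(x) = r(s) e_s`,
    -- rescaled by a factor `c > 0` so that `sup ‖A‖ ≤ 1`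
    (c : ℝ) (hc : 0 < c)
    (A : 𝒮 × 𝒮 → Matrix 𝒮 𝒮 ℝ)
    (hA : ∀ p i j, A p i j =
      c * (if i = p.1 then γ * (if j = p.2 then 1 else 0) - (if j = p.1 then 1 else 0) else 0))
    (b : 𝒮 × 𝒮 → EuclideanSpace ℝ 𝒮)
    (hb : ∀ p j, b p j = c * (if j = p.1 then r p.1 else 0))
    (hAmax1 : ∀ p, ‖Matrix.toEuclideanCLM (𝕜 := ℝ) (A p)‖ ≤ 1)
    -- `Ā`, `b̄`, and the Hurwitz property
    (Abar : Matrix 𝒮 𝒮 ℝ)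
    (hAbar : ∀ i j, Abar i j = ∑ p : 𝒮 × 𝒮, (πS p.1 * PS p.1 p.2) * A p i j)
    (bbar : EuclideanSpace ℝ 𝒮)
    (hbbar : ∀ j, bbar j = ∑ p : 𝒮 × 𝒮, (πS p.1 * PS p.1 p.2) * b p j)
    (hHurwitz : ∀ z ∈ spectrum ℂ (Abar.map (algebraMap ℝ ℂ)), z.re < 0)
    -- the target `θ*`
    (θstar : EuclideanSpace ℝ 𝒮)
    (hθstar : Matrix.toEuclideanCLM (𝕜 := ℝ) Abar θstar + bbar = 0)
    -- the Lyapunov matrix and its largest eigenvalue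
    (Γ : Matrix 𝒮 𝒮 ℝ) (hΓsymm : Γ.IsSymm) (hΓpos : Γ.PosDef)
    (hLyap : Matrix.transpose Abar * Γ + Γ * Abar = -1)
    (γmax : ℝ)
    (hγup : ∀ v : EuclideanSpace ℝ 𝒮, ⟪v, Matrix.toEuclideanCLM (𝕜 := ℝ) Γ v⟫ ≤ γmax * ‖v‖ ^ 2)
    (hγup' : ∃ v : EuclideanSpace ℝ 𝒮, v ≠ 0 ∧
      ⟪v, Matrix.toEuclideanCLM (𝕜 := ℝ) Γ v⟫ = γmax * ‖v‖ ^ 2)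
    -- stepsize, mixing time and the stepsize condition
    (α : ℝ) (hα : 0 < α)
    (Amax bmax : ℝ)
    (hAub : ∀ p, ‖Matrix.toEuclideanCLM (𝕜 := ℝ) (A p)‖ ≤ Amax)
    (hAlub : ∀ e, (∀ p, ‖Matrix.toEuclideanCLM (𝕜 := ℝ) (A p)‖ ≤ e) → Amax ≤ e)
    (hbub : ∀ p, ‖b p‖ ≤ bmax)
    (hblub : ∀ e, (∀ p, ‖b p‖ ≤ e) → bmax ≤ e)
    (τ : ℕ) (hτ : IsMixingBdd K A b Abar bbar Amax bmax α τ)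
    (hτmin : ∀ t, IsMixingBdd K A b Abar bbar Amax bmax α t → τ ≤ t)
    (hstepsize : α * τ < 0.05 / (95 * γmax))
    -- the invariant distribution of the joint chain `(x_k, θ_k)`
    (hsm : Measurable fun q : ((𝒮 × 𝒮) × EuclideanSpace ℝ 𝒮) × (𝒮 × 𝒮) =>
      q.1.2 + α • (Matrix.toEuclideanCLM (𝕜 := ℝ) (A q.1.1) q.1.2 + b q.1.1))
    (ν : Measure ((𝒮 × 𝒮) × EuclideanSpace ℝ 𝒮)) [IsProbabilityMeasure ν]
    (hνinv : Kernel.Invariant (jointKernel K A b α hsm) ν)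
    (hνL2 : Integrable (fun p => ‖p.2‖ ^ 2) ν) :
    -- the zero-bias condition `E[A(x_k) θ* + b(x_k) ∣ x_{k+1}] = 0` holds, and the
    -- asymptotic bias of TD(0) vanishes: `E[θ_∞] = θ* = V`
    (∀ q : 𝒮 × 𝒮,
      ∑ p : 𝒮 × 𝒮, ((πS p.1 * PS p.1 p.2) * (PS p.1 q.1 * PS q.1 q.2)) •
        (Matrix.toEuclideanCLM (𝕜 := ℝ) (A p) V + b p) = 0) ∧
    θstar = V ∧ (∫ p, p.2 ∂ν) = V := by
  classical
  -- coordinate formula for the TD(0) matrix action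
  have hCLMA : ∀ (x : 𝒮 × 𝒮) (v : EuclideanSpace ℝ 𝒮) (u : 𝒮),
      (Matrix.toEuclideanCLM (𝕜 := ℝ) (A x) v) u
        = if u = x.1 then c * (γ * v x.2 - v x.1) else 0 := by
    intro x v u
    rw [clm_apply]
    by_cases h1 : u = x.1
    · rw [if_pos h1]
      have hterm : ∀ j, A x u j * v j
          = (if j = x.2 then c * γ * v j else 0) - (if j = x.1 then c * v j else 0) := by
        intro j
        rw [hA x u j, if_pos h1]
        split_ifs <;> ring
      simp_rw [hterm]
      rw [Finset.sum_sub_distrib, Finset.sum_ite_eq', Finset.sum_ite_eq']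
      simp only [Finset.mem_univ, if_true]
      ring
    · rw [if_neg h1]
      have hterm : ∀ j, A x u j * v j = 0 := by
        intro j
        rw [hA x u j, if_neg h1]
        ring
      simp_rw [hterm]
      simp
  -- Bellman consequence
  have hBell : ∀ s, ∑ s', PS s s' * (r s + γ * V s' - V s) = 0 := by
    intro s
    have hterm : ∀ s', PS s s' * (r s + γ * V s' - V s)
        = PS s s' * (r s - V s) + γ * (PS s s' * V s') := by intro s'; ring
    simp_rw [hterm]
    rw [Finset.sum_add_distrib, ← Finset.sum_mul, ← Finset.mul_sum, hPS1 s]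
    have := hV s
    linarith
  -- TD vector identity
  have hTD : ∀ p : 𝒮 × 𝒮, Matrix.toEuclideanCLM (𝕜 := ℝ) (A p) V + b p
      = (c * (r p.1 + γ * V p.2 - V p.1)) • EuclideanSpace.single p.1 1 := by
    intro p
    ext u
    show (Matrix.toEuclideanCLM (𝕜 := ℝ) (A p) V) u + b p u = _
    rw [hCLMA p V u, hb p u]
    have : ((c * (r p.1 + γ * V p.2 - V p.1)) • EuclideanSpace.single p.1 (1:ℝ)) u
        = (c * (r p.1 + γ * V p.2 - V p.1)) * (if u = p.1 then 1 else 0) := by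
      rw [show ((c * (r p.1 + γ * V p.2 - V p.1)) • EuclideanSpace.single p.1 (1:ℝ)) u
        = (c * (r p.1 + γ * V p.2 - V p.1)) * (EuclideanSpace.single p.1 (1:ℝ)) u from rfl,
        EuclideanSpace.single_apply]
    rw [this]
    by_cases h : u = p.1 <;> simp [h] <;> ring
  -- Part 1 : the zero-bias condition
  have part1 : ∀ q : 𝒮 × 𝒮,
      ∑ p : 𝒮 × 𝒮, ((πS p.1 * PS p.1 p.2) * (PS p.1 q.1 * PS q.1 q.2)) •
        (Matrix.toEuclideanCLM (𝕜 := ℝ) (A p) V + b p) = 0 := by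
    intro q
    simp_rw [hTD, smul_smul]
    rw [Fintype.sum_prod_type]
    refine Finset.sum_eq_zero fun s _ => ?_
    dsimp only
    rw [← Finset.sum_smul]
    have : ∑ s', (πS (s, s').1 * PS (s, s').1 (s, s').2) * (PS (s, s').1 q.1 * PS q.1 q.2) *
        (c * (r (s, s').1 + γ * V (s, s').2 - V (s, s').1)) = 0 := by
      have hterm : ∀ s', (πS (s, s').1 * PS (s, s').1 (s, s').2) * (PS (s, s').1 q.1 * PS q.1 q.2)
          * (c * (r (s, s').1 + γ * V (s, s').2 - V (s, s').1))
          = (πS s * PS s q.1 * PS q.1 q.2 * c) * (PS s s' * (r s + γ * V s' - V s)) := by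
        intro s'; ring
      simp_rw [hterm]
      rw [← Finset.mul_sum, hBell s, mul_zero]
    rw [this, zero_smul]
  -- Abar V + bbar = 0 in coordinates
  have hAbarV : ∀ u, (∑ j, Abar u j * V j) + bbar u = 0 := by
    intro u
    have h1 : ∑ j, Abar u j * V j = ∑ p : 𝒮 × 𝒮, (πS p.1 * PS p.1 p.2) * (∑ j, A p u j * V j) := by
      calc ∑ j, Abar u j * V j
          = ∑ j, ∑ p : 𝒮 × 𝒮, (πS p.1 * PS p.1 p.2 * A p u j) * V j := by
            simp_rw [hAbar, Finset.sum_mul]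
        _ = ∑ p : 𝒮 × 𝒮, ∑ j, (πS p.1 * PS p.1 p.2 * A p u j) * V j := Finset.sum_comm
        _ = ∑ p : 𝒮 × 𝒮, (πS p.1 * PS p.1 p.2) * (∑ j, A p u j * V j) := by
            refine Finset.sum_congr rfl fun p _ => ?_
            rw [Finset.mul_sum]
            refine Finset.sum_congr rfl fun j _ => ?_
            ring
    rw [h1, hbbar u, ← Finset.sum_add_distrib]
    have h2 : ∀ p : 𝒮 × 𝒮, (πS p.1 * PS p.1 p.2) * (∑ j, A p u j * V j)
        + (πS p.1 * PS p.1 p.2) * b p u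
        = (πS p.1 * PS p.1 p.2) * ((Matrix.toEuclideanCLM (𝕜 := ℝ) (A p) V + b p) u) := by
      intro p
      have : (Matrix.toEuclideanCLM (𝕜 := ℝ) (A p) V + b p) u
          = (Matrix.toEuclideanCLM (𝕜 := ℝ) (A p) V) u + b p u := rfl
      rw [this, clm_apply]
      ring
    simp_rw [h2, hTD]
    have h3 : ∀ p : 𝒮 × 𝒮, (πS p.1 * PS p.1 p.2) *
        (((c * (r p.1 + γ * V p.2 - V p.1)) • EuclideanSpace.single p.1 (1:ℝ)) u)
        = if u = p.1 then (πS p.1 * PS p.1 p.2) * (c * (r p.1 + γ * V p.2 - V p.1)) else 0 := by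
      intro p
      rw [show ((c * (r p.1 + γ * V p.2 - V p.1)) • EuclideanSpace.single p.1 (1:ℝ)) u
        = (c * (r p.1 + γ * V p.2 - V p.1)) * (EuclideanSpace.single p.1 (1:ℝ)) u from rfl,
        EuclideanSpace.single_apply]
      by_cases h : u = p.1 <;> simp [h] <;> ring
    simp_rw [h3]
    rw [Fintype.sum_prod_type]
    have h4 : ∀ s, (∑ s', if u = (s, s').1 then
        (πS (s, s').1 * PS (s, s').1 (s, s').2) * (c * (r (s, s').1 + γ * V (s, s').2 -
          V (s, s').1)) else 0)
        = if u = s then ∑ s', (πS s * PS s s') * (c * (r s + γ * V s' - V s)) else 0 := by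
      intro s
      by_cases h : u = s <;> simp [h]
    simp_rw [h4]
    rw [Finset.sum_ite_eq]
    simp only [Finset.mem_univ, if_true]
    have hterm : ∀ s', (πS u * PS u s') * (c * (r u + γ * V s' - V u))
        = (πS u * c) * (PS u s' * (r u + γ * V s' - V u)) := by intro s'; ring
    simp_rw [hterm]
    rw [← Finset.mul_sum, hBell u, mul_zero]
  -- θstar = V
  have hθV : θstar = V := by
    have hθc : ∀ u, (∑ j, Abar u j * θstar j) + bbar u = 0 := by
      intro u
      have h2 : (Matrix.toEuclideanCLM (𝕜 := ℝ) Abar θstar) u + bbar u = 0 := by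
        calc (Matrix.toEuclideanCLM (𝕜 := ℝ) Abar θstar) u + bbar u
            = (Matrix.toEuclideanCLM (𝕜 := ℝ) Abar θstar + bbar) u := rfl
          _ = (0 : EuclideanSpace ℝ 𝒮) u := by rw [hθstar]
          _ = 0 := rfl
      rw [clm_apply] at h2
      exact h2
    set d : 𝒮 → ℝ := fun j => θstar j - V j with hd
    have hAd : Abar.mulVec d = 0 := by
      funext u
      have h1 := hθc u
      have h2 := hAbarV u
      show ∑ j, Abar u j * d j = 0
      have : ∑ j, Abar u j * d j = (∑ j, Abar u j * θstar j) - ∑ j, Abar u j * V j := by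
        rw [← Finset.sum_sub_distrib]
        refine Finset.sum_congr rfl fun j _ => ?_
        rw [hd]; ring
      rw [this]; linarith
    have hdot : dotProduct d ((Matrix.transpose Abar * Γ + Γ * Abar).mulVec d)
        = dotProduct d ((-1 : Matrix 𝒮 𝒮 ℝ).mulVec d) := by rw [hLyap]
    have hL : dotProduct d ((Matrix.transpose Abar * Γ + Γ * Abar).mulVec d) = 0 := by
      rw [Matrix.add_mulVec, dotProduct_add, ← Matrix.mulVec_mulVec,
        ← Matrix.mulVec_mulVec, Matrix.dotProduct_mulVec d Abar.transpose,
        Matrix.vecMul_transpose, hAd, Matrix.mulVec_zero, dotProduct_zero,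
        zero_dotProduct]
      ring
    have hR : dotProduct d ((-1 : Matrix 𝒮 𝒮 ℝ).mulVec d) = -(dotProduct d d) := by
      rw [Matrix.neg_mulVec, Matrix.one_mulVec, dotProduct_neg]
    have hdd : dotProduct d d = 0 := by
      rw [hdot, hR] at hL
      linarith
    have hzero : ∀ j, d j = 0 := by
      intro j
      have hnn : ∀ i ∈ Finset.univ, 0 ≤ d i * d i := fun i _ => mul_self_nonneg _
      have := (Finset.sum_eq_zero_iff_of_nonneg hnn).mp hdd j (Finset.mem_univ j)
      nlinarith [this]
    ext j
    have := hzero j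
    rw [hd] at this
    simp only at this
    linarith
  refine ⟨part1, hθV, ?_⟩
  -- ===== Part 3 : vanishing asymptotic bias =====
  have hKR : ∀ (x q : 𝒮 × 𝒮), ((K x) {q}).toReal = PS x.1 q.1 * PS q.1 q.2 := by
    intro x q
    rw [hK x q, ENNReal.toReal_ofReal (mul_nonneg (hPS0 _ _) (hPS0 _ _))]
  set wv : 𝒮 × 𝒮 → ℝ := fun x => (ν (Prod.fst ⁻¹' {x})).toReal with hwvdef
  set Mv : 𝒮 × 𝒮 → EuclideanSpace ℝ 𝒮 :=
    fun x => ∫ p, (if p.1 = x then (1:ℝ) else 0) • p.2 ∂ν with hMvdef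
  have hwrec : ∀ q, wv q = ∑ x, (PS x.1 q.1 * PS q.1 q.2) * wv x := by
    intro q
    have h := w_rec K A b α hsm ν hνinv hνL2 q
    simp_rw [hKR] at h
    exact h
  have hMrec : ∀ q, Mv q = ∑ x, (PS x.1 q.1 * PS q.1 q.2) •
      (Mv x + α • (Matrix.toEuclideanCLM (𝕜 := ℝ) (A x) (Mv x) + wv x • b x)) := by
    intro q
    have h := M_rec K A b α hsm ν hνinv hνL2 q
    simp_rw [hKR] at h
    exact h
  have hwtot : ∑ x, wv x = 1 := w_total ν
  have hMtot : ∑ x, Mv x = ∫ p, p.2 ∂ν := M_total ν hνL2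
  -- positivity of the stationary distribution
  have hπpos : ∀ u, 0 < πS u := by
    obtain ⟨N, hN⟩ := hprim
    have hinvN : ∀ u, ∑ s, πS s * ((Matrix.of PS) ^ N) s u = πS u :=
      fun u => vecMul_pow_invariant PS πS hπSinv N u
    intro u
    obtain ⟨s0, hs0⟩ : ∃ s0, 0 < πS s0 := by
      by_contra h
      push_neg at h
      have : ∑ s, πS s ≤ 0 := Finset.sum_nonpos fun s _ => h s
      rw [hπS1] at this
      linarith
    have hle : πS s0 * ((Matrix.of PS) ^ N) s0 u ≤ ∑ s, πS s * ((Matrix.of PS) ^ N) s u :=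
      Finset.single_le_sum (f := fun s => πS s * ((Matrix.of PS) ^ N) s u)
        (fun s _ => mul_nonneg (hπS0 s) (le_of_lt (hN s u))) (Finset.mem_univ s0)
    have hpos := mul_pos hs0 (hN s0 u)
    rw [hinvN u] at hle
    linarith
  -- the first marginal of wv
  set wS : 𝒮 → ℝ := fun s => ∑ s', wv (s, s') with hwSdef
  have hstepa : ∀ q : 𝒮 × 𝒮, wv q = PS q.1 q.2 * ∑ s, wS s * PS s q.1 := by
    intro q
    rw [hwrec q, Fintype.sum_prod_type, Finset.mul_sum]
    refine Finset.sum_congr rfl fun s _ => ?_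
    rw [show wS s = ∑ s', wv (s, s') from rfl, Finset.sum_mul, Finset.mul_sum]
    refine Finset.sum_congr rfl fun s' _ => ?_
    dsimp only
    ring
  have hwSinv : ∀ t, ∑ s, wS s * PS s t = wS t := by
    intro t
    have h1 : wS t = ∑ t', wv (t, t') := rfl
    have h2 : ∀ t' : 𝒮, wv (t, t') = PS t t' * ∑ s, wS s * PS s t := fun t' => hstepa (t, t')
    rw [h1]
    simp_rw [h2]
    rw [← Finset.sum_mul, hPS1 t, one_mul]
  have hwSsum : ∑ s, wS s = 1 := by
    rw [← hwtot, Fintype.sum_prod_type]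
  have hwSeq : ∀ s, wS s = πS s := by
    have hdiff : ∀ t, ∑ s, (wS s - πS s) * PS s t = (fun s => wS s - πS s) t := by
      intro t
      simp_rw [sub_mul]
      rw [Finset.sum_sub_distrib, hwSinv t, hπSinv t]
    have hsum0 : ∑ s, (wS s - πS s) = 0 := by
      rw [Finset.sum_sub_distrib, hwSsum, hπS1]
      ring
    have hz := pf_zero PS hPS0 hPS1 hprim (fun s => wS s - πS s) hdiff hsum0
    intro s
    have h := congrFun hz s
    simp only [Pi.zero_apply] at h
    linarith
  have hwform : ∀ q : 𝒮 × 𝒮, wv q = πS q.1 * PS q.1 q.2 := by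
    intro q
    rw [hstepa q]
    simp_rw [hwSeq]
    rw [hπSinv q.1]
    ring
  -- the centered measure-vector
  set Md : 𝒮 × 𝒮 → EuclideanSpace ℝ 𝒮 := fun x => Mv x - wv x • V with hMddef
  have hMvMd : ∀ x, Mv x = Md x + wv x • V := by
    intro x
    show Mv x = (Mv x - wv x • V) + wv x • V
    abel
  have hMdrec : ∀ q : 𝒮 × 𝒮, Md q = ∑ x, (PS x.1 q.1 * PS q.1 q.2) •
      (Md x + α • Matrix.toEuclideanCLM (𝕜 := ℝ) (A x) (Md x)) := by
    intro q
    have hterm : ∀ x : 𝒮 × 𝒮, (PS x.1 q.1 * PS q.1 q.2) •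
        (Mv x + α • (Matrix.toEuclideanCLM (𝕜 := ℝ) (A x) (Mv x) + wv x • b x))
        = (PS x.1 q.1 * PS q.1 q.2) • (Md x + α • Matrix.toEuclideanCLM (𝕜 := ℝ) (A x) (Md x))
          + ((PS x.1 q.1 * PS q.1 q.2) * wv x) • V
          + α • (((πS x.1 * PS x.1 x.2) * (PS x.1 q.1 * PS q.1 q.2)) •
              (Matrix.toEuclideanCLM (𝕜 := ℝ) (A x) V + b x)) := by
      intro x
      rw [← hwform x, hMvMd x, map_add, _root_.map_smul]
      module
    have hexp : Mv q = (∑ x, (PS x.1 q.1 * PS q.1 q.2) •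
        (Md x + α • Matrix.toEuclideanCLM (𝕜 := ℝ) (A x) (Md x))) + wv q • V := by
      rw [hMrec q]
      simp_rw [hterm]
      rw [Finset.sum_add_distrib, Finset.sum_add_distrib, ← Finset.sum_smul, ← Finset.smul_sum,
        part1 q, smul_zero, add_zero, ← hwrec q]
    show Mv q - wv q • V = _
    rw [hexp]
    abel
  -- aggregate over the first component
  set G : 𝒮 → EuclideanSpace ℝ 𝒮 := fun t => ∑ x : 𝒮 × 𝒮, PS x.1 t •
    (Md x + α • Matrix.toEuclideanCLM (𝕜 := ℝ) (A x) (Md x)) with hGdef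
  have hMdG : ∀ q : 𝒮 × 𝒮, Md q = PS q.1 q.2 • G q.1 := by
    intro q
    rw [hMdrec q]
    show _ = PS q.1 q.2 • ∑ x : 𝒮 × 𝒮, PS x.1 q.1 •
      (Md x + α • Matrix.toEuclideanCLM (𝕜 := ℝ) (A x) (Md x))
    rw [Finset.smul_sum]
    refine Finset.sum_congr rfl fun x _ => ?_
    rw [smul_smul, mul_comm]
  have hMdco : ∀ (x : 𝒮 × 𝒮) (u : 𝒮), Md x u = PS x.1 x.2 * G x.1 u := by
    intro x u
    calc Md x u = (PS x.1 x.2 • G x.1) u := by rw [hMdG x]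
      _ = PS x.1 x.2 * G x.1 u := rfl
  have hGco : ∀ t u, G t u = ∑ x : 𝒮 × 𝒮, PS x.1 t * (Md x u
      + α * (if u = x.1 then c * (γ * Md x x.2 - Md x x.1) else 0)) := by
    intro t u
    have h0 : G t u = ∑ x : 𝒮 × 𝒮, (PS x.1 t •
        (Md x + α • Matrix.toEuclideanCLM (𝕜 := ℝ) (A x) (Md x))) u :=
      by rw [WithLp.ofLp_sum]; exact Finset.sum_apply u Finset.univ _
    rw [h0]
    refine Finset.sum_congr rfl fun x _ => ?_
    have h1 : (PS x.1 t • (Md x + α • Matrix.toEuclideanCLM (𝕜 := ℝ) (A x) (Md x))) u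
        = PS x.1 t * (Md x u + α * (Matrix.toEuclideanCLM (𝕜 := ℝ) (A x) (Md x)) u) := rfl
    rw [h1, hCLMA]
  have hGrec : ∀ t u, G t u = ∑ s, PS s t * G s u
      + α * c * (PS u t * (γ * (∑ s', PS u s' * G u s') - G u u)) := by
    intro t u
    rw [hGco t u]
    have hterm : ∀ x : 𝒮 × 𝒮, PS x.1 t * (Md x u
        + α * (if u = x.1 then c * (γ * Md x x.2 - Md x x.1) else 0))
        = PS x.1 t * PS x.1 x.2 * G x.1 u
          + (if u = x.1 then α * c * PS x.1 t * (γ * (PS x.1 x.2 * G x.1 x.2)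
              - PS x.1 x.2 * G x.1 x.1) else 0) := by
      intro x
      rw [hMdco x u, hMdco x x.2, hMdco x x.1]
      by_cases h : u = x.1
      · rw [if_pos h, if_pos h]
        ring
      · rw [if_neg h, if_neg h]
        ring
    simp_rw [hterm]
    rw [Finset.sum_add_distrib, Fintype.sum_prod_type, Fintype.sum_prod_type]
    congr 1
    · refine Finset.sum_congr rfl fun s _ => ?_
      have hin : ∀ s' : 𝒮, PS (s, s').1 t * PS (s, s').1 (s, s').2 * G (s, s').1 u
          = PS s s' * (PS s t * G s u) := by
        intro s'
        dsimp only
        ring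
      simp_rw [hin]
      rw [← Finset.sum_mul, hPS1 s, one_mul]
    · have hpull : ∀ s : 𝒮, (∑ s' : 𝒮, if u = (s, s').1 then
          α * c * PS (s, s').1 t * (γ * (PS (s, s').1 (s, s').2 * G (s, s').1 (s, s').2)
            - PS (s, s').1 (s, s').2 * G (s, s').1 (s, s').1) else 0)
          = if u = s then ∑ s' : 𝒮, α * c * PS s t * (γ * (PS s s' * G s s')
              - PS s s' * G s s) else 0 := by
        intro s
        by_cases h : u = s <;> simp [h]
      simp_rw [hpull]
      rw [Finset.sum_ite_eq]
      simp only [Finset.mem_univ, if_true]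
      have hin : ∀ s' : 𝒮, α * c * PS u t * (γ * (PS u s' * G u s') - PS u s' * G u u)
          = (α * c * PS u t * γ) * (PS u s' * G u s')
            - (α * c * PS u t * G u u) * PS u s' := by
        intro s'
        ring
      simp_rw [hin]
      rw [Finset.sum_sub_distrib, ← Finset.mul_sum, ← Finset.mul_sum, hPS1 u]
      ring
  -- the TD error of G vanishes
  have hδ0 : ∀ u, γ * (∑ s', PS u s' * G u s') - G u u = 0 := by
    intro u
    have h1 : ∑ t, G t u = ∑ t, (∑ s, PS s t * G s u
        + α * c * (PS u t * (γ * (∑ s', PS u s' * G u s') - G u u))) :=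
      Finset.sum_congr rfl fun t _ => hGrec t u
    rw [Finset.sum_add_distrib] at h1
    have h2 : ∑ t, ∑ s, PS s t * G s u = ∑ s, G s u := by
      rw [Finset.sum_comm]
      refine Finset.sum_congr rfl fun s _ => ?_
      have hin : ∀ t, PS s t * G s u = G s u * PS s t := fun t => mul_comm _ _
      simp_rw [hin]
      rw [← Finset.mul_sum, hPS1 s, mul_one]
    have h3 : ∑ t, α * c * (PS u t * (γ * (∑ s', PS u s' * G u s') - G u u))
        = α * c * (γ * (∑ s', PS u s' * G u s') - G u u) := by
      have hin : ∀ t, α * c * (PS u t * (γ * (∑ s', PS u s' * G u s') - G u u))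
          = (α * c * (γ * (∑ s', PS u s' * G u s') - G u u)) * PS u t := fun t => by ring
      simp_rw [hin]
      rw [← Finset.mul_sum, hPS1 u, mul_one]
    rw [h2, h3] at h1
    have h4 : α * c * (γ * (∑ s', PS u s' * G u s') - G u u) = 0 := by linarith
    have hαc : α * c ≠ 0 := ne_of_gt (mul_pos hα hc)
    exact (mul_eq_zero.mp h4).resolve_left hαc
  have hGinv : ∀ u t, ∑ s, G s u * PS s t = G t u := by
    intro u t
    have h := hGrec t u
    rw [hδ0 u] at h
    simp only [mul_zero, add_zero] at h
    rw [h]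
    exact Finset.sum_congr rfl fun s _ => mul_comm _ _
  -- G has rank-one structure
  set κv : 𝒮 → ℝ := fun u => ∑ s, G s u with hκvdef
  have hGform : ∀ t u, G t u = κv u * πS t := by
    intro t u
    have hdiff : ∀ t', ∑ s, (G s u - κv u * πS s) * PS s t'
        = (fun s => G s u - κv u * πS s) t' := by
      intro t'
      simp_rw [sub_mul]
      rw [Finset.sum_sub_distrib, hGinv u t']
      have hin : ∀ s, κv u * πS s * PS s t' = κv u * (πS s * PS s t') := fun s => by ring
      simp_rw [hin]
      rw [← Finset.mul_sum, hπSinv t']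
    have hsum0 : ∑ s, (G s u - κv u * πS s) = 0 := by
      rw [Finset.sum_sub_distrib, ← Finset.mul_sum, hπS1, mul_one]
      exact sub_eq_zero.mpr rfl
    have hz := pf_zero PS hPS0 hPS1 hprim _ hdiff hsum0
    have h := congrFun hz t
    simp only [Pi.zero_apply] at h
    linarith
  have hκeq : ∀ u, κv u = γ * ∑ s', PS u s' * κv s' := by
    intro u
    have h := hδ0 u
    have h1 : ∀ s', PS u s' * G u s' = PS u s' * (κv s' * πS u) :=
      fun s' => by rw [hGform u s']
    rw [hGform u u] at h
    simp_rw [h1] at h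
    have h2 : ∑ s', PS u s' * (κv s' * πS u) = (∑ s', PS u s' * κv s') * πS u := by
      rw [Finset.sum_mul]
      exact Finset.sum_congr rfl fun s' _ => by ring
    rw [h2] at h
    have h3 : (γ * ∑ s', PS u s' * κv s') * πS u = κv u * πS u := by linear_combination h
    exact (mul_right_cancel₀ (ne_of_gt (hπpos u)) h3).symm
  have hκ0 : ∀ u, κv u = 0 := by
    obtain ⟨u0, _, hmax⟩ := Finset.exists_max_image Finset.univ (fun u => |κv u|)
      Finset.univ_nonempty
    have key : |κv u0| ≤ γ * |κv u0| := by
      calc |κv u0| = |γ * ∑ s', PS u0 s' * κv s'| := by rw [← hκeq u0]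
        _ = γ * |∑ s', PS u0 s' * κv s'| := by rw [abs_mul, abs_of_nonneg hγ0]
        _ ≤ γ * ∑ s', |PS u0 s' * κv s'| :=
            mul_le_mul_of_nonneg_left (Finset.abs_sum_le_sum_abs _ _) hγ0
        _ = γ * ∑ s', PS u0 s' * |κv s'| := by
            congr 1
            exact Finset.sum_congr rfl fun s' _ => by
              rw [abs_mul, abs_of_nonneg (hPS0 u0 s')]
        _ ≤ γ * ∑ s', PS u0 s' * |κv u0| := by
            refine mul_le_mul_of_nonneg_left (Finset.sum_le_sum fun s' _ => ?_) hγ0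
            exact mul_le_mul_of_nonneg_left (hmax s' (Finset.mem_univ s')) (hPS0 u0 s')
        _ = γ * |κv u0| := by rw [← Finset.sum_mul, hPS1 u0, one_mul]
    have h0 : |κv u0| = 0 := by nlinarith [abs_nonneg (κv u0)]
    intro u
    have hu := hmax u (Finset.mem_univ u)
    rw [h0] at hu
    exact abs_eq_zero.mp (le_antisymm hu (abs_nonneg _))
  have hMd0 : ∀ q : 𝒮 × 𝒮, Md q = 0 := by
    intro q
    rw [hMdG q]
    have hGz : G q.1 = 0 := by
      ext u
      show G q.1 u = 0
      rw [hGform q.1 u, hκ0 u, zero_mul]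
    rw [hGz, smul_zero]
  calc (∫ p, p.2 ∂ν) = ∑ x, Mv x := hMtot.symm
    _ = ∑ x : 𝒮 × 𝒮, (Md x + wv x • V) := Finset.sum_congr rfl fun x _ => hMvMd x
    _ = ∑ x : 𝒮 × 𝒮, wv x • V := by
        refine Finset.sum_congr rfl fun x _ => ?_
        rw [hMd0 x, zero_add]
    _ = (∑ x : 𝒮 × 𝒮, wv x) • V := (Finset.sum_smul).symm
    _ = V := by rw [hwtot, one_smul]
end
end
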